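/- Let V ⊆ (ℤ/2)^{2n} be a subgroup with a generating set consisting of c symplectic pairs g₁,h₁,…,g_c,h_c and r isotropic generators g_{c+1},…,g_{c+r} satisfying the standard commutation relations. Then V admits a new generating set of one of three types: (I) all generators of even weight; (II) exactly one isotropic generator of odd weight and all other generators of even weight; (III) one symplectic pair with both members of odd weight and all other generators of even weight; in each case the new generators still satisfy the commutation relations. -/
import Mathlib


open Finset

/-- An `n`-qubit Pauli operator modulo phase, identified with `(u, v) ∈ (ℤ/2)ⁿ × (ℤ/2)ⁿ`
(corresponding to `Z^u X^v`). -/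
abbrev Pauli (n : ℕ) := (Fin n → ZMod 2) × (Fin n → ZMod 2)

/-- The weight of a Pauli operator: the number of qubits on which it acts nontrivially. -/
def wtP {n : ℕ} (g : Pauli n) : ℕ :=
  (Finset.univ.filter fun i => g.1 i ≠ 0 ∨ g.2 i ≠ 0).card

/-- The symplectic inner product of two Pauli operators. -/
def sip {n : ℕ} (g h : Pauli n) : ZMod 2 :=
  ∑ i, (g.1 i * h.2 i + g.2 i * h.1 i)

lemma sip_self {n : ℕ} (a : Pauli n) : sip a a = 0 := by
  unfold sip
  have : ∀ x y : ZMod 2, x * y + y * x = 0 := by decide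
  simp [this]

lemma sip_comm {n : ℕ} (a b : Pauli n) : sip a b = sip b a := by
  unfold sip
  refine Finset.sum_congr rfl fun i _ => by ring

lemma sip_add_left {n : ℕ} (a b x : Pauli n) : sip (a + b) x = sip a x + sip b x := by
  unfold sip
  rw [← Finset.sum_add_distrib]
  refine Finset.sum_congr rfl fun i _ => by simp; ring

lemma sip_add_right {n : ℕ} (x a b : Pauli n) : sip x (a + b) = sip x a + sip x b := by
  rw [sip_comm, sip_add_left, sip_comm a x, sip_comm b x]

def par {n : ℕ} (a : Pauli n) : ZMod 2 := (wtP a : ZMod 2)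

lemma wt_cast {n : ℕ} (a : Pauli n) :
    par a = ∑ i, (if a.1 i ≠ 0 ∨ a.2 i ≠ 0 then (1 : ZMod 2) else 0) := by
  unfold par wtP
  rw [Finset.card_filter]
  push_cast
  simp [apply_ite]

lemma par_add {n : ℕ} (a b : Pauli n) : par (a + b) = par a + par b + sip a b := by
  have pt : ∀ a1 a2 b1 b2 : ZMod 2,
      (if a1 + b1 ≠ 0 ∨ a2 + b2 ≠ 0 then (1 : ZMod 2) else 0) =
        (if a1 ≠ 0 ∨ a2 ≠ 0 then 1 else 0) + (if b1 ≠ 0 ∨ b2 ≠ 0 then 1 else 0)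
          + (a1 * b2 + a2 * b1) := by decide
  rw [wt_cast, wt_cast, wt_cast]
  unfold sip
  rw [← Finset.sum_add_distrib, ← Finset.sum_add_distrib]
  refine Finset.sum_congr rfl fun i _ => ?_
  simpa using pt (a.1 i) (a.2 i) (b.1 i) (b.2 i)

lemma even_wt_iff {n : ℕ} (a : Pauli n) : Even (wtP a) ↔ par a = 0 := by
  rw [par, ZMod.natCast_eq_zero_iff]
  exact even_iff_two_dvd

lemma add_self_pauli {n : ℕ} (a : Pauli n) : a + a = 0 := by
  ext i <;> simp [CharTwo.add_self_eq_zero]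

open Set Function
local notation "cl" => AddSubgroup.closure

lemma closure_pair_eq {n m k : ℕ} (g g' : Fin m → Pauli n) (h h' : Fin k → Pauli n)
    (h1 : ∀ i, g' i ∈ cl (range g ∪ range h))
    (h2 : ∀ j, h' j ∈ cl (range g ∪ range h))
    (h3 : ∀ i, g i ∈ cl (range g' ∪ range h'))
    (h4 : ∀ j, h j ∈ cl (range g' ∪ range h')) :
    cl (range g' ∪ range h') = cl (range g ∪ range h) := by
  apply le_antisymm <;> rw [AddSubgroup.closure_le] <;> rintro x (⟨i, rfl⟩ | ⟨j, rfl⟩)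
  · exact h1 i
  · exact h2 j
  · exact h3 i
  · exact h4 j

lemma mem_cl_g {n m k : ℕ} (g : Fin m → Pauli n) (h : Fin k → Pauli n) (i : Fin m) :
    g i ∈ cl (range g ∪ range h) :=
  AddSubgroup.subset_closure (Or.inl ⟨i, rfl⟩)

lemma mem_cl_h {n m k : ℕ} (g : Fin m → Pauli n) (h : Fin k → Pauli n) (j : Fin k) :
    h j ∈ cl (range g ∪ range h) :=
  AddSubgroup.subset_closure (Or.inr ⟨j, rfl⟩)

lemma card_filter_lt {m : ℕ} {α : Type*} (p : α → Prop) [DecidablePred p] (f f' : Fin m → α)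
    (i0 : Fin m) (hmono : ∀ i, p (f' i) → p (f i)) (h1 : p (f i0)) (h2 : ¬ p (f' i0)) :
    (univ.filter fun i => p (f' i)).card < (univ.filter fun i => p (f i)).card := by
  apply Finset.card_lt_card
  constructor
  · intro i hi
    simp only [mem_filter] at hi ⊢
    exact ⟨mem_univ i, hmono i (by simpa using hi)⟩
  · intro hsub
    have := hsub (by simp [h1] : i0 ∈ univ.filter fun i => p (f i))
    simp only [mem_filter] at this
    exact h2 this.2

lemma two_eq_zero : (2 : ZMod 2) = 0 := by decide

lemma moveG_gg {n m : ℕ} (g : Fin m → Pauli n)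
    (hgg : ∀ i j, sip (g i) (g j) = 0)
    (i0 : Fin m) (x : Pauli n)
    (hx1 : ∀ i, i ≠ i0 → sip x (g i) = 0) :
    ∀ i j, sip (update g i0 (g i0 + x) i) (update g i0 (g i0 + x) j) = 0 := by
  intro i j
  by_cases hi : i = i0 <;> by_cases hj : j = i0
  · subst hi; subst hj; exact sip_self _
  · subst hi
    rw [update_self, update_of_ne hj, sip_add_left, hgg, hx1 j hj, add_zero]
  · subst hj
    rw [update_self, update_of_ne hi, sip_comm, sip_add_left, hgg, hx1 i hi, add_zero]
  · rw [update_of_ne hi, update_of_ne hj]; exact hgg i j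

lemma moveG_gh {n m k : ℕ} (g : Fin m → Pauli n) (h : Fin k → Pauli n)
    (hgh : ∀ i j, sip (g i) (h j) = if (i : ℕ) = (j : ℕ) then 1 else 0)
    (i0 : Fin m) (x : Pauli n)
    (hx2 : ∀ j, sip x (h j) = 0) :
    ∀ i j, sip (update g i0 (g i0 + x) i) (h j) = if (i : ℕ) = (j : ℕ) then 1 else 0 := by
  intro i j
  by_cases hi : i = i0
  · subst hi; rw [update_self, sip_add_left, hgh, hx2 j, add_zero]
  · rw [update_of_ne hi]; exact hgh i j

lemma moveH_hh {n k : ℕ} (h : Fin k → Pauli n)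
    (hhh : ∀ i j, sip (h i) (h j) = 0)
    (j0 : Fin k) (x : Pauli n)
    (hx1 : ∀ j, j ≠ j0 → sip x (h j) = 0) :
    ∀ i j, sip (update h j0 (h j0 + x) i) (update h j0 (h j0 + x) j) = 0 := by
  intro i j
  by_cases hi : i = j0 <;> by_cases hj : j = j0
  · subst hi; subst hj; exact sip_self _
  · subst hi
    rw [update_self, update_of_ne hj, sip_add_left, hhh, hx1 j hj, add_zero]
  · subst hj
    rw [update_self, update_of_ne hi, sip_comm, sip_add_left, hhh, hx1 i hi, add_zero]
  · rw [update_of_ne hi, update_of_ne hj]; exact hhh i j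

lemma moveH_gh {n m k : ℕ} (g : Fin m → Pauli n) (h : Fin k → Pauli n)
    (hgh : ∀ i j, sip (g i) (h j) = if (i : ℕ) = (j : ℕ) then 1 else 0)
    (j0 : Fin k) (x : Pauli n)
    (hx2 : ∀ i, sip (g i) x = 0) :
    ∀ i j, sip (g i) (update h j0 (h j0 + x) j) = if (i : ℕ) = (j : ℕ) then 1 else 0 := by
  intro i j
  by_cases hj : j = j0
  · subst hj; rw [update_self, sip_add_right, hgh, hx2 i, add_zero]
  · rw [update_of_ne hj]; exact hgh i j

lemma closure_updateG {n m k : ℕ} (g : Fin m → Pauli n) (h : Fin k → Pauli n)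
    (i0 : Fin m) (x : Pauli n)
    (hx : x ∈ cl (range g ∪ range h))
    (hx' : x ∈ cl (range (update g i0 (g i0 + x)) ∪ range h)) :
    cl (range (update g i0 (g i0 + x)) ∪ range h) = cl (range g ∪ range h) := by
  apply closure_pair_eq
  · intro i
    by_cases hi : i = i0
    · subst hi; rw [update_self]; exact add_mem (mem_cl_g g h i) hx
    · rw [update_of_ne hi]; exact mem_cl_g g h i
  · exact mem_cl_h g h
  · intro i
    by_cases hi : i = i0
    · subst hi
      have h2 := add_mem (mem_cl_g (update g i (g i + x)) h i) hx'
      rwa [update_self, add_assoc, add_self_pauli, add_zero] at h2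
    · have : g i = update g i0 (g i0 + x) i := (update_of_ne hi _ _).symm
      rw [this]; exact mem_cl_g _ h i
  · exact mem_cl_h _ h

lemma closure_updateH {n m k : ℕ} (g : Fin m → Pauli n) (h : Fin k → Pauli n)
    (j0 : Fin k) (x : Pauli n)
    (hx : x ∈ cl (range g ∪ range h))
    (hx' : x ∈ cl (range g ∪ range (update h j0 (h j0 + x)))) :
    cl (range g ∪ range (update h j0 (h j0 + x))) = cl (range g ∪ range h) := by
  apply closure_pair_eq
  · exact mem_cl_g g h
  · intro j
    by_cases hj : j = j0
    · subst hj; rw [update_self]; exact add_mem (mem_cl_h g h j) hx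
    · rw [update_of_ne hj]; exact mem_cl_h g h j
  · exact mem_cl_g g _
  · intro j
    by_cases hj : j = j0
    · subst hj
      have h2 := add_mem (mem_cl_h g (update h j (h j + x)) j) hx'
      rwa [update_self, add_assoc, add_self_pauli, add_zero] at h2
    · have : h j = update h j0 (h j0 + x) j := (update_of_ne hj _ _).symm
      rw [this]; exact mem_cl_h g _ j

lemma zmod2_ne1 {x : ZMod 2} (h : x ≠ 1) : x = 0 := by revert h; revert x; decide
lemma zmod2_ne0 {x : ZMod 2} (h : x ≠ 0) : x = 1 := by revert h; revert x; decide

lemma odd_wt_iff {n : ℕ} (a : Pauli n) : ¬ Even (wtP a) ↔ par a = 1 := by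
  rw [even_wt_iff]
  constructor
  · exact fun h => zmod2_ne0 h
  · intro h1 h0; rw [h1] at h0; exact one_ne_zero h0

lemma castAdd_val_iff {c r : ℕ} (i : Fin (c + r)) (j : Fin c) :
    (i : ℕ) = (j : ℕ) ↔ i = Fin.castAdd r j := by
  constructor
  · intro e; exact Fin.ext (by simpa using e)
  · intro e; subst e; simp

def Concl {n c r : ℕ} (g : Fin (c + r) → Pauli n) (h : Fin c → Pauli n) : Prop :=
  ∃ (g' : Fin (c + r) → Pauli n) (h' : Fin c → Pauli n),
      (AddSubgroup.closure (Set.range g' ∪ Set.range h') : AddSubgroup (Pauli n)) =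
        AddSubgroup.closure (Set.range g ∪ Set.range h) ∧
      (∀ i j, sip (g' i) (g' j) = 0) ∧
      (∀ i j, sip (h' i) (h' j) = 0) ∧
      (∀ (i : Fin (c + r)) (j : Fin c),
        sip (g' i) (h' j) = if (i : ℕ) = (j : ℕ) then 1 else 0) ∧
      (((∀ i, Even (wtP (g' i))) ∧ (∀ j, Even (wtP (h' j)))) ∨
      ((∃ i₀ : Fin (c + r), c ≤ (i₀ : ℕ) ∧ ¬ Even (wtP (g' i₀)) ∧
          (∀ i, i ≠ i₀ → Even (wtP (g' i)))) ∧ (∀ j, Even (wtP (h' j)))) ∨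
      (∃ j₀ : Fin c, ¬ Even (wtP (g' (Fin.castAdd r j₀))) ∧ ¬ Even (wtP (h' j₀)) ∧
        (∀ i : Fin (c + r), i ≠ Fin.castAdd r j₀ → Even (wtP (g' i))) ∧
        (∀ j, j ≠ j₀ → Even (wtP (h' j)))))

lemma Concl_trans {n c r : ℕ} {g g1 : Fin (c + r) → Pauli n} {h h1 : Fin c → Pauli n}
    (hc : Concl g1 h1)
    (he : AddSubgroup.closure (Set.range g1 ∪ Set.range h1)
        = AddSubgroup.closure (Set.range g ∪ Set.range h)) :
    Concl g h := by
  obtain ⟨g', h', e, rest⟩ := hc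
  exact ⟨g', h', e.trans he, rest⟩

lemma key {n c r : ℕ} (N : ℕ) :
    ∀ (g : Fin (c + r) → Pauli n) (h : Fin c → Pauli n),
    (univ.filter fun i => par (g i) = 1).card + (univ.filter fun j => par (h j) = 1).card ≤ N →
    (∀ i j, sip (g i) (g j) = 0) →
    (∀ i j, sip (h i) (h j) = 0) →
    (∀ i j, sip (g i) (h j) = if (i : ℕ) = (j : ℕ) then 1 else 0) →
    Concl g h := by
  induction N with
  | zero =>
    intro g h hm hgg hhh hgh
    have hg0 : ∀ i, par (g i) = 0 := by
      intro i
      by_contra hne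
      have h1 : par (g i) = 1 := zmod2_ne0 hne
      have hmem : i ∈ univ.filter fun i => par (g i) = 1 := by simp [h1]
      have := Finset.card_pos.2 ⟨i, hmem⟩
      omega
    have hh0 : ∀ j, par (h j) = 0 := by
      intro j
      by_contra hne
      have h1 : par (h j) = 1 := zmod2_ne0 hne
      have hmem : j ∈ univ.filter fun j => par (h j) = 1 := by simp [h1]
      have := Finset.card_pos.2 ⟨j, hmem⟩
      omega
    exact ⟨g, h, rfl, hgg, hhh, hgh,
      Or.inl ⟨fun i => (even_wt_iff _).2 (hg0 i), fun j => (even_wt_iff _).2 (hh0 j)⟩⟩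
  | succ N ih =>
    intro g h hm hgg hhh hgh
    by_cases H2 : ∃ j : Fin c, par (h j) = 1 ∧ par (g (Fin.castAdd r j)) = 0
    · -- Move M2 : h j0 ← h j0 + g (castAdd r j0)
      obtain ⟨j0, hpj, hpg⟩ := H2
      have hx1 : ∀ k, k ≠ j0 → sip (g (Fin.castAdd r j0)) (h k) = 0 := by
        intro k hk
        rw [hgh]
        have hne : (j0 : ℕ) ≠ (k : ℕ) := fun e => hk (Fin.ext e).symm
        simp [Fin.coe_castAdd, hne]
      have hx2 : ∀ i, sip (g i) (g (Fin.castAdd r j0)) = 0 := fun i => hgg i _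
      have hs : sip (h j0) (g (Fin.castAdd r j0)) = 1 := by
        rw [sip_comm, hgh]; simp
      have hpar : par (h j0 + g (Fin.castAdd r j0)) = 0 := by
        rw [par_add, hpj, hs, show par (g (Fin.castAdd r j0)) = 0 from hpg]; decide
      have hhh' := moveH_hh h hhh j0 _ hx1
      have hgh' := moveH_gh g h hgh j0 _ hx2
      have hcl := closure_updateH g h j0 (g (Fin.castAdd r j0)) (mem_cl_g g h _) (mem_cl_g g _ _)
      have hlt : (univ.filter fun j =>
            par (update h j0 (h j0 + g (Fin.castAdd r j0)) j) = 1).card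
          < (univ.filter fun j => par (h j) = 1).card := by
        apply card_filter_lt (fun a => par a = 1) h _ j0
        · intro j hj
          by_cases hjj : j = j0
          · subst hjj; rw [update_self, hpar] at hj; exact absurd hj (by decide)
          · rwa [update_of_ne hjj] at hj
        · exact hpj
        · rw [update_self, hpar]; decide
      exact Concl_trans (ih g _ (by omega) hgg hhh' hgh') hcl
    · by_cases H1 : ∃ j : Fin c, par (g (Fin.castAdd r j)) = 1 ∧ par (h j) = 0
      · -- Move M1 : g (castAdd r j0) ← g (castAdd r j0) + h j0
        obtain ⟨j0, hpg, hpj⟩ := H1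
        have hx1 : ∀ i, i ≠ Fin.castAdd r j0 → sip (h j0) (g i) = 0 := by
          intro i hi
          rw [sip_comm, hgh]
          have hne : (i : ℕ) ≠ (j0 : ℕ) := fun e => hi ((castAdd_val_iff i j0).1 e)
          simp [hne]
        have hx2 : ∀ k, sip (h j0) (h k) = 0 := fun k => hhh _ k
        have hs : sip (g (Fin.castAdd r j0)) (h j0) = 1 := by rw [hgh]; simp
        have hpar : par (g (Fin.castAdd r j0) + h j0) = 0 := by
          rw [par_add, hpg, hs, show par (h j0) = 0 from hpj]; decide
        have hgg' := moveG_gg g hgg (Fin.castAdd r j0) _ hx1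
        have hgh' := moveG_gh g h hgh (Fin.castAdd r j0) _ hx2
        have hcl := closure_updateG g h (Fin.castAdd r j0) (h j0) (mem_cl_h g h _) (mem_cl_h _ h _)
        have hlt : (univ.filter fun i =>
              par (update g (Fin.castAdd r j0) (g (Fin.castAdd r j0) + h j0) i) = 1).card
            < (univ.filter fun i => par (g i) = 1).card := by
          apply card_filter_lt (fun a => par a = 1) g _ (Fin.castAdd r j0)
          · intro i hi
            by_cases hii : i = Fin.castAdd r j0
            · subst hii; rw [update_self, hpar] at hi; exact absurd hi (by decide)
            · rwa [update_of_ne hii] at hi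
          · exact hpg
          · rw [update_self, hpar]; decide
        exact Concl_trans (ih _ h (by omega) hgg' hhh hgh') hcl
      · by_cases HB2 : ∃ i1 i2 : Fin (c + r),
            c ≤ (i1 : ℕ) ∧ c ≤ (i2 : ℕ) ∧ i1 ≠ i2 ∧ par (g i1) = 1 ∧ par (g i2) = 1
        · -- Move M3 : g i2 ← g i2 + g i1
          obtain ⟨i1, i2, hc1, hc2, hne, hp1, hp2⟩ := HB2
          have hx1 : ∀ i, i ≠ i2 → sip (g i1) (g i) = 0 := fun i _ => hgg i1 i
          have hx2 : ∀ k, sip (g i1) (h k) = 0 := by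
            intro k; rw [hgh]
            have hne' : (i1 : ℕ) ≠ (k : ℕ) := by have := k.isLt; omega
            simp [hne']
          have hpar : par (g i2 + g i1) = 0 := by
            rw [par_add, hp2, hp1, hgg]; decide
          have hgg' := moveG_gg g hgg i2 _ hx1
          have hgh' := moveG_gh g h hgh i2 _ hx2
          have hcl := closure_updateG g h i2 (g i1) (mem_cl_g g h i1) (by
            simpa [update_apply, hne] using mem_cl_g (update g i2 (g i2 + g i1)) h i1)
          have hlt : (univ.filter fun i => par (update g i2 (g i2 + g i1) i) = 1).card
              < (univ.filter fun i => par (g i) = 1).card := by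
            apply card_filter_lt (fun a => par a = 1) g _ i2
            · intro i hi
              by_cases hii : i = i2
              · subst hii; rw [update_self, hpar] at hi; exact absurd hi (by decide)
              · rwa [update_of_ne hii] at hi
            · exact hp2
            · rw [update_self, hpar]; decide
          exact Concl_trans (ih _ h (by omega) hgg' hhh hgh') hcl
        · by_cases HB1 : ∃ i : Fin (c + r), c ≤ (i : ℕ) ∧ par (g i) = 1
          · obtain ⟨i1, hc1, hp1⟩ := HB1
            by_cases HJ1 : ∃ j : Fin c, par (h j) = 1
            · -- Move M4 : g (castAdd r j0) ← g (castAdd r j0) + g i1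
              obtain ⟨j0, hpj⟩ := HJ1
              have hpg : par (g (Fin.castAdd r j0)) = 1 :=
                zmod2_ne0 (fun h0 => H2 ⟨j0, hpj, h0⟩)
              have hne : i1 ≠ Fin.castAdd r j0 := by
                intro e; rw [e] at hc1
                simp only [Fin.coe_castAdd] at hc1
                have := j0.isLt; omega
              have hx1 : ∀ i, i ≠ Fin.castAdd r j0 → sip (g i1) (g i) = 0 := fun i _ => hgg i1 i
              have hx2 : ∀ k, sip (g i1) (h k) = 0 := by
                intro k; rw [hgh]
                have hne' : (i1 : ℕ) ≠ (k : ℕ) := by have := k.isLt; omega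
                simp [hne']
              have hpar : par (g (Fin.castAdd r j0) + g i1) = 0 := by
                rw [par_add, hpg, hp1, hgg]; decide
              have hgg' := moveG_gg g hgg (Fin.castAdd r j0) _ hx1
              have hgh' := moveG_gh g h hgh (Fin.castAdd r j0) _ hx2
              have hcl := closure_updateG g h (Fin.castAdd r j0) (g i1) (mem_cl_g g h i1) (by
                simpa [update_apply, hne] using
                  mem_cl_g (update g (Fin.castAdd r j0) (g (Fin.castAdd r j0) + g i1)) h i1)
              have hlt : (univ.filter fun i =>
                    par (update g (Fin.castAdd r j0) (g (Fin.castAdd r j0) + g i1) i) = 1).card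
                  < (univ.filter fun i => par (g i) = 1).card := by
                apply card_filter_lt (fun a => par a = 1) g _ (Fin.castAdd r j0)
                · intro i hi
                  by_cases hii : i = Fin.castAdd r j0
                  · subst hii; rw [update_self, hpar] at hi; exact absurd hi (by decide)
                  · rwa [update_of_ne hii] at hi
                · exact hpg
                · rw [update_self, hpar]; decide
              exact Concl_trans (ih _ h (by omega) hgg' hhh hgh') hcl
            · -- Terminal: Type II
              have hh0 : ∀ j, par (h j) = 0 := fun j => zmod2_ne1 (fun e => HJ1 ⟨j, e⟩)
              have hother : ∀ i, i ≠ i1 → par (g i) = 0 := by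
                intro i hi
                by_cases hci : c ≤ (i : ℕ)
                · exact zmod2_ne1 (fun e => HB2 ⟨i1, i, hc1, hci, Ne.symm hi, hp1, e⟩)
                · obtain ⟨j, rfl⟩ : ∃ j : Fin c, i = Fin.castAdd r j :=
                    ⟨⟨(i : ℕ), by omega⟩, Fin.ext rfl⟩
                  exact zmod2_ne1 (fun e => H1 ⟨j, e, hh0 j⟩)
              exact ⟨g, h, rfl, hgg, hhh, hgh, Or.inr (Or.inl
                ⟨⟨i1, hc1, (odd_wt_iff _).2 hp1,
                  fun i hi => (even_wt_iff _).2 (hother i hi)⟩,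
                 fun j => (even_wt_iff _).2 (hh0 j)⟩)⟩
          · by_cases HJ2 : ∃ j1 j2 : Fin c, j1 ≠ j2 ∧ par (h j1) = 1 ∧ par (h j2) = 1
            · -- Move M5 : g (jc j1) ← g (jc j1) + g (jc j2), h j2 ← h j2 + h j1
              obtain ⟨j1, j2, hne, hp1, hp2⟩ := HJ2
              have hpg1 : par (g (Fin.castAdd r j1)) = 1 :=
                zmod2_ne0 (fun h0 => H2 ⟨j1, hp1, h0⟩)
              have hpg2 : par (g (Fin.castAdd r j2)) = 1 :=
                zmod2_ne0 (fun h0 => H2 ⟨j2, hp2, h0⟩)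
              have hnev : (j1 : ℕ) ≠ (j2 : ℕ) := fun e => hne (Fin.ext e)
              have hne12 : Fin.castAdd r j1 ≠ Fin.castAdd r j2 := by
                intro e; exact hnev (by simpa using congrArg Fin.val e)
              have hgg' := moveG_gg g hgg (Fin.castAdd r j1) (g (Fin.castAdd r j2))
                (fun i _ => hgg _ i)
              have hhh' := moveH_hh h hhh j2 (h j1) (fun k _ => hhh _ k)
              have hgh' : ∀ i k,
                  sip (update g (Fin.castAdd r j1)
                        (g (Fin.castAdd r j1) + g (Fin.castAdd r j2)) i)
                      (update h j2 (h j2 + h j1) k) = if (i : ℕ) = (k : ℕ) then 1 else 0 := by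
                intro i k
                by_cases hi : i = Fin.castAdd r j1 <;> by_cases hk : k = j2
                · rw [hi, hk, update_self, update_self, sip_add_left, sip_add_right,
                    sip_add_right, hgh, hgh, hgh, hgh]
                  simp only [Fin.coe_castAdd]
                  simp [hnev, Ne.symm hnev]
                  try decide
                · rw [hi, update_self, update_of_ne hk, sip_add_left, hgh, hgh]
                  simp only [Fin.coe_castAdd]
                  have hkv : (j2 : ℕ) ≠ (k : ℕ) := fun e => hk (Fin.ext e).symm
                  simp [hkv]
                · rw [hk, update_of_ne hi, update_self, sip_add_right, hgh, hgh]
                  have hiv : (i : ℕ) ≠ (j1 : ℕ) := fun e => hi ((castAdd_val_iff i j1).1 e)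
                  simp [hiv]
                · rw [update_of_ne hi, update_of_ne hk]; exact hgh i k
              have hcl : cl (range (update g (Fin.castAdd r j1)
                      (g (Fin.castAdd r j1) + g (Fin.castAdd r j2)))
                    ∪ range (update h j2 (h j2 + h j1)))
                  = cl (range g ∪ range h) := by
                apply closure_pair_eq
                · intro i
                  by_cases hi : i = Fin.castAdd r j1
                  · rw [hi, update_self]
                    exact add_mem (mem_cl_g g h _) (mem_cl_g g h _)
                  · rw [update_of_ne hi]; exact mem_cl_g g h i
                · intro k
                  by_cases hk : k = j2
                  · rw [hk, update_self]
                    exact add_mem (mem_cl_h g h _) (mem_cl_h g h _)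
                  · rw [update_of_ne hk]; exact mem_cl_h g h k
                · intro i
                  by_cases hi : i = Fin.castAdd r j1
                  · rw [hi]
                    have h2 := add_mem
                      (mem_cl_g (update g (Fin.castAdd r j1)
                        (g (Fin.castAdd r j1) + g (Fin.castAdd r j2)))
                        (update h j2 (h j2 + h j1)) (Fin.castAdd r j1))
                      (mem_cl_g (update g (Fin.castAdd r j1)
                        (g (Fin.castAdd r j1) + g (Fin.castAdd r j2)))
                        (update h j2 (h j2 + h j1)) (Fin.castAdd r j2))
                    rwa [update_self, update_of_ne (Ne.symm hne12), add_assoc,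
                      add_self_pauli, add_zero] at h2
                  · rw [show g i = update g (Fin.castAdd r j1)
                        (g (Fin.castAdd r j1) + g (Fin.castAdd r j2)) i from
                      (update_of_ne hi _ _).symm]
                    exact mem_cl_g _ _ i
                · intro k
                  by_cases hk : k = j2
                  · rw [hk]
                    have h2 := add_mem
                      (mem_cl_h (update g (Fin.castAdd r j1)
                        (g (Fin.castAdd r j1) + g (Fin.castAdd r j2)))
                        (update h j2 (h j2 + h j1)) j2)
                      (mem_cl_h (update g (Fin.castAdd r j1)
                        (g (Fin.castAdd r j1) + g (Fin.castAdd r j2)))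
                        (update h j2 (h j2 + h j1)) j1)
                    rwa [update_self, update_of_ne hne, add_assoc,
                      add_self_pauli, add_zero] at h2
                  · rw [show h k = update h j2 (h j2 + h j1) k from
                      (update_of_ne hk _ _).symm]
                    exact mem_cl_h _ _ k
              have hparg : par (g (Fin.castAdd r j1) + g (Fin.castAdd r j2)) = 0 := by
                rw [par_add, hpg1, hpg2, hgg]; decide
              have hparh : par (h j2 + h j1) = 0 := by
                rw [par_add, hp2, hp1, hhh]; decide
              have hltg : (univ.filter fun i => par (update g (Fin.castAdd r j1)
                    (g (Fin.castAdd r j1) + g (Fin.castAdd r j2)) i) = 1).card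
                  < (univ.filter fun i => par (g i) = 1).card := by
                apply card_filter_lt (fun a => par a = 1) g _ (Fin.castAdd r j1)
                · intro i hi
                  by_cases hii : i = Fin.castAdd r j1
                  · subst hii; rw [update_self, hparg] at hi; exact absurd hi (by decide)
                  · rwa [update_of_ne hii] at hi
                · exact hpg1
                · rw [update_self, hparg]; decide
              have hlth : (univ.filter fun j =>
                    par (update h j2 (h j2 + h j1) j) = 1).card
                  < (univ.filter fun j => par (h j) = 1).card := by
                apply card_filter_lt (fun a => par a = 1) h _ j2
                · intro j hj
                  by_cases hjj : j = j2
                  · subst hjj; rw [update_self, hparh] at hj; exact absurd hj (by decide)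
                  · rwa [update_of_ne hjj] at hj
                · exact hp2
                · rw [update_self, hparh]; decide
              exact Concl_trans (ih _ _ (by omega) hgg' hhh' hgh') hcl
            · by_cases HJ1 : ∃ j : Fin c, par (h j) = 1
              · -- Terminal: Type III
                obtain ⟨j0, hpj⟩ := HJ1
                have hpg : par (g (Fin.castAdd r j0)) = 1 :=
                  zmod2_ne0 (fun h0 => H2 ⟨j0, hpj, h0⟩)
                have hhother : ∀ j, j ≠ j0 → par (h j) = 0 :=
                  fun j hj => zmod2_ne1 (fun e => HJ2 ⟨j, j0, hj, e, hpj⟩)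
                have hgother : ∀ i, i ≠ Fin.castAdd r j0 → par (g i) = 0 := by
                  intro i hi
                  by_cases hci : c ≤ (i : ℕ)
                  · exact zmod2_ne1 (fun e => HB1 ⟨i, hci, e⟩)
                  · obtain ⟨j, rfl⟩ : ∃ j : Fin c, i = Fin.castAdd r j :=
                      ⟨⟨(i : ℕ), by omega⟩, Fin.ext rfl⟩
                    have hjj : j ≠ j0 := fun e => hi (by rw [e])
                    exact zmod2_ne1 (fun e => H1 ⟨j, e, hhother j hjj⟩)
                exact ⟨g, h, rfl, hgg, hhh, hgh, Or.inr (Or.inr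
                  ⟨j0, (odd_wt_iff _).2 hpg, (odd_wt_iff _).2 hpj,
                   fun i hi => (even_wt_iff _).2 (hgother i hi),
                   fun j hj => (even_wt_iff _).2 (hhother j hj)⟩)⟩
              · -- Terminal: Type I
                have hh0 : ∀ j, par (h j) = 0 := fun j => zmod2_ne1 (fun e => HJ1 ⟨j, e⟩)
                have hg0 : ∀ i, par (g i) = 0 := by
                  intro i
                  by_cases hci : c ≤ (i : ℕ)
                  · exact zmod2_ne1 (fun e => HB1 ⟨i, hci, e⟩)
                  · obtain ⟨j, rfl⟩ : ∃ j : Fin c, i = Fin.castAdd r j :=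
                      ⟨⟨(i : ℕ), by omega⟩, Fin.ext rfl⟩
                    exact zmod2_ne1 (fun e => H1 ⟨j, e, hh0 j⟩)
                exact ⟨g, h, rfl, hgg, hhh, hgh,
                  Or.inl ⟨fun i => (even_wt_iff _).2 (hg0 i),
                    fun j => (even_wt_iff _).2 (hh0 j)⟩⟩

/-- Lemma 2 of the paper: any generating set consisting of `c` symplectic pairs and `r`
isotropic generators satisfying the standard commutation relations can be replaced by a
new generating set of the same shape (generating the same subgroup and satisfying the same
commutation relations) which is of type I, II, or III. -/
theorem generators_type_I_II_III {n c r : ℕ} (g : Fin (c + r) → Pauli n) (h : Fin c → Pauli n)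
    (hgg : ∀ i j, sip (g i) (g j) = 0)
    (hhh : ∀ i j, sip (h i) (h j) = 0)
    (hgh : ∀ (i : Fin (c + r)) (j : Fin c), sip (g i) (h j) = if (i : ℕ) = (j : ℕ) then 1 else 0) :
    ∃ (g' : Fin (c + r) → Pauli n) (h' : Fin c → Pauli n),
      (AddSubgroup.closure (Set.range g' ∪ Set.range h') : AddSubgroup (Pauli n)) =
        AddSubgroup.closure (Set.range g ∪ Set.range h) ∧
      (∀ i j, sip (g' i) (g' j) = 0) ∧
      (∀ i j, sip (h' i) (h' j) = 0) ∧
      (∀ (i : Fin (c + r)) (j : Fin c),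
        sip (g' i) (h' j) = if (i : ℕ) = (j : ℕ) then 1 else 0) ∧
      -- Type I: all generators even weight
      (((∀ i, Even (wtP (g' i))) ∧ (∀ j, Even (wtP (h' j)))) ∨
      -- Type II: exactly one isotropic generator of odd weight, all others even
      ((∃ i₀ : Fin (c + r), c ≤ (i₀ : ℕ) ∧ ¬ Even (wtP (g' i₀)) ∧
          (∀ i, i ≠ i₀ → Even (wtP (g' i)))) ∧ (∀ j, Even (wtP (h' j)))) ∨
      -- Type III: one symplectic pair with both members of odd weight, all others even
      (∃ j₀ : Fin c, ¬ Even (wtP (g' (Fin.castAdd r j₀))) ∧ ¬ Even (wtP (h' j₀)) ∧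
        (∀ i : Fin (c + r), i ≠ Fin.castAdd r j₀ → Even (wtP (g' i))) ∧
        (∀ j, j ≠ j₀ → Even (wtP (h' j))))) := by
  exact key _ g h le_rfl hgg hhh hgh
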